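/- Let b2 > q ≥ 1 be integers and let k = T − b1 ≥ q for some integers T > b1 ≥ 1. Define q×b2 matrices over F_2: P'_{b2} = (I_q | 0) and, for i ∈ [1, b2−1], P'_i has a single 1 in row ((i−1) mod q)+1 and column q + ((i−1) mod (b2−q)) + 1, zeros elsewhere. Then the b2·q × b2·q block matrix M with (r,c)-block equal to P'_{b2 − r + c} for r, c ∈ [1, q] (where P'_j = 0 if j ∉ [1, b2]) — i.e., the truncated matrix P'_0 of the paper — is invertible over F_2. -/

import Mathlib

/-- Top `q` rows of the RD parity matrices `P'_i` (items (II)-(III) of the RD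
construction): `P'_{b2} = (I_q | 0)`; for `i ∈ [1, b2-1]`, `P'_i` has a single
1 in row `((i-1) mod q) + 1` and column `q + ((i-1) mod (b2-q)) + 1`;
`P'_i = 0` otherwise. (Indices below are 0-based.) -/
def rdBlock (b2 q i : ℕ) : Matrix (Fin q) (Fin b2) (ZMod 2) :=
  if i = b2 then
    fun d e => if (e : ℕ) = (d : ℕ) then 1 else 0
  else if 1 ≤ i ∧ i ≤ b2 - 1 then
    fun d e => if (d : ℕ) = (i - 1) % q ∧ (e : ℕ) = q + (i - 1) % (b2 - q) then 1 else 0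
  else 0

/-- The truncated matrix `P'₀`: the `b2*q × b2*q` block matrix whose
(r,c)-block is `P'_{b2 - r + c}` (with `P'_j = 0` for `j ∉ [1, b2]`),
where row blocks are indexed by `r ∈ [1, b2]` (with `q` rows each) and column
blocks by `c ∈ [1, q]` (with `b2` columns each). A row is encoded as a pair
`(r, d)` and a column as a pair `(e, c)`, where `d`, `e` are the 0-based
positions inside the blocks. -/
def rdTruncated (b2 q : ℕ) :
    Matrix (Fin b2 × Fin q) (Fin b2 × Fin q) (ZMod 2) :=
  fun rd ec => rdBlock b2 q (b2 - (rd.1 : ℕ) - 1 + (ec.2 : ℕ) + 1) rd.2 ec.1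

lemma rd_mod_inj {q a b : ℕ} (ha : a < q) (hb : b < q) (k : ℕ)
    (h : (k + a) % q = (k + b) % q) : a = b := by
  have h' : a ≡ b [MOD q] := Nat.ModEq.add_left_cancel' k h
  have := h'
  unfold Nat.ModEq at this
  rw [Nat.mod_eq_of_lt ha, Nat.mod_eq_of_lt hb] at this
  exact this

lemma rd_exists_j (N c m : ℕ) (hN : 0 < N) (hm : m < N) :
    ∃ j, c ≤ j ∧ j < c + N ∧ j % N = m := by
  obtain ⟨p, hpc, hpm⟩ : ∃ p, p + c % N = c ∧ ∀ m, (p + m) % N = m % N :=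
    ⟨N * (c / N), Nat.div_add_mod c N, fun m => Nat.mul_add_mod _ _ _⟩
  have hcN : c % N < N := Nat.mod_lt _ hN
  rcases le_or_gt (c % N) m with h | h
  · refine ⟨p + m, by omega, by omega, ?_⟩
    rw [hpm, Nat.mod_eq_of_lt hm]
  · refine ⟨p + N + m, by omega, by omega, ?_⟩
    rw [add_assoc, hpm, Nat.add_mod_left, Nat.mod_eq_of_lt hm]

lemma rd_entryA {b2 q : ℕ} (r e : Fin b2) (d c : Fin q) (h : (c : ℕ) = (r : ℕ)) :
    rdTruncated b2 q (r, d) (e, c) = if (e : ℕ) = (d : ℕ) then 1 else 0 := by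
  have hr : (r : ℕ) < b2 := r.isLt
  have hi : b2 - (r : ℕ) - 1 + (c : ℕ) + 1 = b2 := by omega
  simp [rdTruncated, hi, rdBlock]

lemma rd_entryB {b2 q : ℕ} (r e : Fin b2) (d c : Fin q) (h : (c : ℕ) < (r : ℕ)) :
    rdTruncated b2 q (r, d) (e, c) =
      if (d : ℕ) = (b2 - 1 - (r : ℕ) + (c : ℕ)) % q ∧
         (e : ℕ) = q + (b2 - 1 - (r : ℕ) + (c : ℕ)) % (b2 - q) then 1 else 0 := by
  have hr : (r : ℕ) < b2 := r.isLt
  have hne : b2 - (r : ℕ) - 1 + (c : ℕ) + 1 ≠ b2 := by omega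
  have h1 : 1 ≤ b2 - (r : ℕ) - 1 + (c : ℕ) + 1 := by omega
  have h2 : b2 - (r : ℕ) - 1 + (c : ℕ) + 1 ≤ b2 - 1 := by omega
  have hi1 : b2 - (r : ℕ) - 1 + (c : ℕ) + 1 - 1 = b2 - 1 - (r : ℕ) + (c : ℕ) := by omega
  simp only [rdTruncated, rdBlock, if_neg hne, if_pos (And.intro h1 h2), hi1]
  split_ifs <;> simp_all

lemma rd_entryC {b2 q : ℕ} (r e : Fin b2) (d c : Fin q) (h : (r : ℕ) < (c : ℕ)) :
    rdTruncated b2 q (r, d) (e, c) = 0 := by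
  have hr : (r : ℕ) < b2 := r.isLt
  have hne : b2 - (r : ℕ) - 1 + (c : ℕ) + 1 ≠ b2 := by omega
  have h2 : ¬ (b2 - (r : ℕ) - 1 + (c : ℕ) + 1 ≤ b2 - 1) := by omega
  simp [rdTruncated, rdBlock, hne, h2]

/-- Lemma 2 ('invertible') of the paper: the truncated matrix `P'₀` is an
invertible `b2*q × b2*q` binary matrix. -/
theorem stmt1 (b2 q : ℕ) (hq : 1 ≤ q) (hqb : q < b2) :
    IsUnit (rdTruncated b2 q) := by
  rw [Matrix.isUnit_iff_isUnit_det, isUnit_iff_ne_zero]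
  intro hdet
  obtain ⟨v, hv0, hv⟩ := Matrix.exists_mulVec_eq_zero_iff.2 hdet
  apply hv0
  -- Step 1: the coordinates with first index ≥ q vanish.
  have step1 : ∀ (e : Fin b2) (c : Fin q), q ≤ (e : ℕ) → v (e, c) = 0 := by
    intro e c he
    have hN : 0 < b2 - q := by omega
    obtain ⟨j, hjc, hjlt, hjm⟩ := rd_exists_j (b2 - q) (c : ℕ) ((e : ℕ) - q) hN (by omega)
    set r : Fin b2 := ⟨b2 - 1 - (j - (c : ℕ)), by omega⟩ with hrdef
    set d : Fin q := ⟨j % q, Nat.mod_lt _ (by omega)⟩ with hddef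
    have hrval : (r : ℕ) = b2 - 1 - (j - (c : ℕ)) := rfl
    have hdval : (d : ℕ) = j % q := rfl
    have hrq : q ≤ (r : ℕ) := by omega
    have hKr : b2 - 1 - (r : ℕ) = j - (c : ℕ) := by omega
    have key : ∑ x : Fin b2 × Fin q, rdTruncated b2 q (r, d) x * v x = 0 := by
      have := congrFun hv (r, d)
      simpa [Matrix.mulVec, dotProduct] using this
    have hsum : ∑ x : Fin b2 × Fin q, rdTruncated b2 q (r, d) x * v x
        = rdTruncated b2 q (r, d) (e, c) * v (e, c) := by
      refine Finset.sum_eq_single (e, c) ?_ ?_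
      · rintro ⟨e', c'⟩ - hne
        have hc'r : (c' : ℕ) < (r : ℕ) := lt_of_lt_of_le c'.isLt hrq
        rw [rd_entryB r e' d c' hc'r]
        rw [if_neg, zero_mul]
        rintro ⟨hd', he'⟩
        have hKc' : b2 - 1 - (r : ℕ) + (c' : ℕ) = (j - (c : ℕ)) + (c' : ℕ) := by omega
        rw [hKc'] at hd' he'
        have hcc' : (c : ℕ) = (c' : ℕ) := by
          apply rd_mod_inj c.isLt c'.isLt (j - (c : ℕ))
          rw [← hd', hdval]
          congr 1
          omega
        have hc'c : c' = c := Fin.ext hcc'.symm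
        apply hne
        have hjrec : (j - (c : ℕ)) + (c' : ℕ) = j := by omega
        rw [hjrec, hjm] at he'
        have : (e' : ℕ) = (e : ℕ) := by omega
        exact Prod.ext (Fin.ext this) hc'c
      · intro h; exact absurd (Finset.mem_univ _) h
    rw [hsum] at key
    have hcr : (c : ℕ) < (r : ℕ) := lt_of_lt_of_le c.isLt hrq
    rw [rd_entryB r e d c hcr] at key
    have hKc : b2 - 1 - (r : ℕ) + (c : ℕ) = j := by omega
    rw [hKc, if_pos] at key
    · simpa using key
    · constructor
      · exact hdval
      · rw [hjm]; omega
  -- Step 2: the remaining coordinates vanish.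
  funext x
  obtain ⟨e, c⟩ := x
  by_cases hqe : q ≤ (e : ℕ)
  · simpa using step1 e c hqe
  push_neg at hqe
  set r : Fin b2 := ⟨(c : ℕ), lt_trans c.isLt hqb⟩ with hrdef
  set d : Fin q := ⟨(e : ℕ), hqe⟩ with hddef
  have key : ∑ x : Fin b2 × Fin q, rdTruncated b2 q (r, d) x * v x = 0 := by
    have := congrFun hv (r, d)
    simpa [Matrix.mulVec, dotProduct] using this
  have hsum : ∑ x : Fin b2 × Fin q, rdTruncated b2 q (r, d) x * v x
      = rdTruncated b2 q (r, d) (e, c) * v (e, c) := by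
    refine Finset.sum_eq_single (e, c) ?_ ?_
    · rintro ⟨e', c'⟩ - hne
      by_cases hqe' : q ≤ (e' : ℕ)
      · rw [step1 e' c' hqe', mul_zero]
      push_neg at hqe'
      rcases lt_trichotomy ((c' : ℕ)) ((c : ℕ)) with h | h | h
      · rw [rd_entryB r e' d c' h, if_neg, zero_mul]
        rintro ⟨-, he'⟩
        omega
      · rw [rd_entryA r e' d c' h, if_neg, zero_mul]
        intro he'
        apply hne
        have : (e' : ℕ) = (e : ℕ) := he'
        exact Prod.ext (Fin.ext this) (Fin.ext h)
      · rw [rd_entryC r e' d c' h, zero_mul]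
    · intro h; exact absurd (Finset.mem_univ _) h
  rw [hsum, rd_entryA r e d c rfl, if_pos rfl, one_mul] at key
  simpa using key
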